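/- For every a < 0 and every t > 0, one has ∫₀^t erf( a/√τ ) dτ = (2a² + t)·erf( a/√t ) + 2a·√(t/π)·exp(−a²/t) + 2a². -/

import Mathlib

open Real MeasureTheory Filter Set Topology

/-- The error function `erf a = (2/√π) ∫₀^a exp(−b²) db`. -/
noncomputable def erf (a : ℝ) : ℝ := (2 / Real.sqrt π) * ∫ b in (0:ℝ)..a, Real.exp (-b^2)

lemma gauss_cont : Continuous fun b : ℝ => Real.exp (-b^2) := by
  continuity

lemma erf_hasDerivAt (x : ℝ) :
    HasDerivAt erf (2 / Real.sqrt π * Real.exp (-x^2)) x := by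
  have h : HasDerivAt (fun y : ℝ => ∫ b in (0:ℝ)..y, Real.exp (-b^2)) (Real.exp (-x^2)) x :=
    intervalIntegral.integral_hasDerivAt_right (gauss_cont.intervalIntegrable _ _)
      (gauss_cont.stronglyMeasurableAtFilter _ _) gauss_cont.continuousAt
  show HasDerivAt (fun y : ℝ => (2 / Real.sqrt π) * ∫ b in (0:ℝ)..y, Real.exp (-b^2)) _ x
  exact h.const_mul (2 / Real.sqrt π)

lemma gauss_integrableOn_Ioi : IntegrableOn (fun b : ℝ => Real.exp (-b^2)) (Ioi 0) := by
  have := (integrable_exp_neg_mul_sq (b := 1) one_pos).integrableOn (s := Ioi 0)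
  simpa using this

lemma gauss_int_Ioi : ∫ b in Ioi (0:ℝ), Real.exp (-b^2) = Real.sqrt π / 2 := by
  have := integral_gaussian_Ioi 1
  simpa using this

lemma erf_neg_eq (x : ℝ) :
    erf x = -((2 / Real.sqrt π) * ∫ b in (0:ℝ)..(-x), Real.exp (-b^2)) := by
  have : (∫ b in (0:ℝ)..(-x), Real.exp (-b^2))
      = ∫ b in (0:ℝ)..(-x), Real.exp (-(-b)^2) := by
    simp
  rw [erf, this, intervalIntegral.integral_comp_neg (fun b => Real.exp (-b^2))]
  rw [intervalIntegral.integral_symm]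
  simp only [neg_neg, neg_zero]
  rw [mul_neg]

lemma erf_tendsto_atBot : Tendsto erf atBot (nhds (-1)) := by
  have h1 : Tendsto (fun y : ℝ => ∫ b in (0:ℝ)..y, Real.exp (-b^2)) atTop
      (nhds (Real.sqrt π / 2)) := by
    rw [← gauss_int_Ioi]
    exact intervalIntegral_tendsto_integral_Ioi 0 gauss_integrableOn_Ioi tendsto_id
  have h2 : Tendsto (fun x : ℝ => -((2 / Real.sqrt π) *
      ∫ b in (0:ℝ)..(-x), Real.exp (-b^2))) atBot (nhds (-1)) := by
    have h3 := (h1.comp tendsto_neg_atBot_atTop).const_mul (2 / Real.sqrt π)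
    have h4 : (2 / Real.sqrt π) * (Real.sqrt π / 2) = 1 := by
      have := Real.sqrt_pos.2 Real.pi_pos
      field_simp
    rw [h4] at h3
    exact h3.neg
  exact h2.congr (fun x => (erf_neg_eq x).symm)

lemma erf_nonpos {x : ℝ} (hx : x ≤ 0) : erf x ≤ 0 := by
  rw [erf]
  apply mul_nonpos_of_nonneg_of_nonpos
  · positivity
  · rw [intervalIntegral.integral_symm]
    simp only [neg_nonpos]
    apply intervalIntegral.integral_nonneg hx
    intro u _
    positivity

lemma erf_ge_neg_one {x : ℝ} (hx : x ≤ 0) : -1 ≤ erf x := by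
  rw [erf]
  have hπ : (0:ℝ) < Real.sqrt π := Real.sqrt_pos.2 Real.pi_pos
  have key : ∫ b in (0:ℝ)..x, Real.exp (-b^2) ≥ -(Real.sqrt π / 2) := by
    rw [intervalIntegral.integral_symm, ge_iff_le, neg_le_neg_iff]
    rw [intervalIntegral.integral_of_le hx]
    calc ∫ b in Ioc x 0, Real.exp (-b^2)
        ≤ ∫ b in Iic (0:ℝ), Real.exp (-b^2) := by
          apply setIntegral_mono_set
          · have : IntegrableOn (fun b : ℝ => Real.exp (-b^2)) (Iic 0) := by
              have := (integrable_exp_neg_mul_sq (b := 1) one_pos).integrableOn (s := Iic 0)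
              simpa using this
            exact this
          · filter_upwards with b using by positivity
          · exact HasSubset.Subset.eventuallyLE Ioc_subset_Iic_self
      _ = Real.sqrt π / 2 := by
          rw [← gauss_int_Ioi]
          have : (∫ b in Iic (0:ℝ), Real.exp (-(-b)^2))
              = ∫ b in Ioi (-(0:ℝ)), Real.exp (-b^2) :=
            integral_comp_neg_Iic 0 (fun b => Real.exp (-b^2))
          simp only [neg_neg, neg_zero] at this
          rw [← this]
          simp
  calc (-1 : ℝ) = (2 / Real.sqrt π) * (-(Real.sqrt π / 2)) := by
        field_simp
    _ ≤ (2 / Real.sqrt π) * ∫ b in (0:ℝ)..x, Real.exp (-b^2) := by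
        apply mul_le_mul_of_nonneg_left key (by positivity)

/-- `∫₀^t erf(a/√τ) dτ = (2a² + t) erf(a/√t) + 2a √(t/π) exp(−a²/t) + 2a²`
for `a < 0`, `t > 0`. -/
theorem integral_erf_neg (a t : ℝ) (ha : a < 0) (ht : 0 < t) :
    ∫ τ in (0:ℝ)..t, erf (a / Real.sqrt τ)
    = (2*a^2 + t) * erf (a / Real.sqrt t)
      + 2*a * Real.sqrt (t/π) * Real.exp (-(a^2)/t) + 2*a^2 := by
  have hπ : (0:ℝ) < Real.sqrt π := Real.sqrt_pos.2 Real.pi_pos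
  set F : ℝ → ℝ := fun τ => (2*a^2 + τ) * erf (a / Real.sqrt τ)
      + 2*a * (Real.sqrt τ / Real.sqrt π) * Real.exp (-(a^2)/τ) + 2*a^2 with hF
  -- derivative of F on (0, t)
  have hderiv : ∀ τ : ℝ, 0 < τ → HasDerivAt F (erf (a / Real.sqrt τ)) τ := by
    intro τ hτ0
    have hs : 0 < Real.sqrt τ := Real.sqrt_pos.2 hτ0
    have hs2 : Real.sqrt τ * Real.sqrt τ = τ := Real.mul_self_sqrt hτ0.le
    have hsq : HasDerivAt Real.sqrt (1 / (2 * Real.sqrt τ)) τ := Real.hasDerivAt_sqrt hτ0.ne'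
    have hinner : HasDerivAt (fun τ => a / Real.sqrt τ)
        (a * (-(1 / (2 * Real.sqrt τ)) / Real.sqrt τ ^ 2)) τ := by
      have := (hsq.inv hs.ne').const_mul a
      simpa [div_eq_mul_inv] using this
    have herf : HasDerivAt (fun τ => erf (a / Real.sqrt τ))
        ((2 / Real.sqrt π * Real.exp (-(a / Real.sqrt τ)^2))
          * (a * (-(1 / (2 * Real.sqrt τ)) / Real.sqrt τ ^ 2))) τ :=
      (erf_hasDerivAt _).comp τ hinner
    have hxsq : -(a / Real.sqrt τ)^2 = -(a^2)/τ := by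
      rw [div_pow, Real.sq_sqrt hτ0.le]; ring
    rw [hxsq] at herf
    have hexp_inner : HasDerivAt (fun τ : ℝ => -(a^2)/τ) (a^2 / τ^2) τ := by
      have := (hasDerivAt_inv hτ0.ne').const_mul (-(a^2))
      simpa [div_eq_mul_inv, neg_div] using this
    have hexp : HasDerivAt (fun τ : ℝ => Real.exp (-(a^2)/τ))
        (Real.exp (-(a^2)/τ) * (a^2 / τ^2)) τ := hexp_inner.exp
    have hterm1 : HasDerivAt (fun τ => (2*a^2 + τ) * erf (a / Real.sqrt τ))
        (1 * erf (a / Real.sqrt τ) + (2*a^2 + τ) *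
          ((2 / Real.sqrt π * Real.exp (-(a^2)/τ))
            * (a * (-(1 / (2 * Real.sqrt τ)) / Real.sqrt τ ^ 2)))) τ :=
      ((hasDerivAt_id τ).const_add (2*a^2)).mul herf
    have hterm2 : HasDerivAt (fun τ => 2*a * (Real.sqrt τ / Real.sqrt π) * Real.exp (-(a^2)/τ))
        ((2*a / Real.sqrt π) * ((1 / (2 * Real.sqrt τ)) * Real.exp (-(a^2)/τ)
          + Real.sqrt τ * (Real.exp (-(a^2)/τ) * (a^2 / τ^2)))) τ := by
      have := (hsq.mul hexp).const_mul (2*a / Real.sqrt π)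
      apply this.congr_deriv ?_ |>.congr_of_eventuallyEq ?_
      · ring
      · filter_upwards with y
        simp only [Pi.mul_apply]
        ring
    have := (hterm1.add hterm2).add_const (2*a^2)
    apply this.congr_deriv
    have hτne : τ ≠ 0 := hτ0.ne'
    field_simp
    ring_nf
    linear_combination (τ^2*(a*Real.exp (-(a^2*τ⁻¹))) + 2*(a^3*Real.exp (-(a^2*τ⁻¹)))*(Real.sqrt τ^2+τ)) * hs2
  -- integrability of the integrand
  have hint : IntervalIntegrable (fun τ => erf (a / Real.sqrt τ)) volume 0 t := by
    rw [intervalIntegrable_iff_integrableOn_Ioc_of_le ht.le]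
    have hmeas : AEStronglyMeasurable (fun τ => erf (a / Real.sqrt τ))
        (volume.restrict (Ioc 0 t)) := by
      have hc : Continuous erf := by
        have : Differentiable ℝ erf := fun x => (erf_hasDerivAt x).differentiableAt
        exact this.continuous
      exact (hc.measurable.comp (measurable_const.div
        Real.continuous_sqrt.measurable)).aestronglyMeasurable
    apply Integrable.mono' (integrable_const (1:ℝ)) hmeas
    filter_upwards [ae_restrict_mem measurableSet_Ioc] with τ hτ
    have hs : 0 < Real.sqrt τ := Real.sqrt_pos.2 hτ.1
    have hx : a / Real.sqrt τ ≤ 0 := div_nonpos_iff.2 (Or.inr ⟨ha.le, hs.le⟩)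
    rw [Real.norm_eq_abs, abs_le]
    exact ⟨erf_ge_neg_one hx, (erf_nonpos hx).trans zero_le_one⟩
  -- limit at 0⁺
  have hlim0 : Tendsto F (nhdsWithin 0 (Ioi 0)) (nhds 0) := by
    have hsqrt0 : Tendsto (fun τ : ℝ => Real.sqrt τ) (nhdsWithin 0 (Ioi 0))
        (nhdsWithin 0 (Ioi 0)) := by
      apply tendsto_nhdsWithin_of_tendsto_nhds_of_eventually_within
      · simpa using (Real.continuous_sqrt.tendsto 0).mono_left nhdsWithin_le_nhds
      · filter_upwards [self_mem_nhdsWithin] with τ hτ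
        exact Real.sqrt_pos.2 hτ
    have hinv : Tendsto (fun τ : ℝ => (Real.sqrt τ)⁻¹) (nhdsWithin 0 (Ioi 0)) atTop :=
      tendsto_inv_nhdsGT_zero.comp hsqrt0
    have hx : Tendsto (fun τ : ℝ => a / Real.sqrt τ) (nhdsWithin 0 (Ioi 0)) atBot := by
      simpa [div_eq_mul_inv] using hinv.const_mul_atTop_of_neg ha
    have herf0 : Tendsto (fun τ : ℝ => erf (a / Real.sqrt τ)) (nhdsWithin 0 (Ioi 0))
        (nhds (-1)) := erf_tendsto_atBot.comp hx
    have hcoef : Tendsto (fun τ : ℝ => 2*a^2 + τ) (nhdsWithin 0 (Ioi 0)) (nhds (2*a^2)) := by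
      have : Tendsto (fun τ : ℝ => 2*a^2 + τ) (nhds 0) (nhds (2*a^2 + 0)) :=
        (continuous_const.add continuous_id).tendsto 0
      simpa using this.mono_left nhdsWithin_le_nhds
    have hsq0 : Tendsto (fun τ : ℝ => Real.sqrt τ / Real.sqrt π) (nhdsWithin 0 (Ioi 0))
        (nhds 0) := by
      have : Tendsto (fun τ : ℝ => Real.sqrt τ / Real.sqrt π) (nhds 0)
          (nhds (Real.sqrt 0 / Real.sqrt π)) :=
        (Real.continuous_sqrt.div_const _).tendsto 0
      simpa using this.mono_left nhdsWithin_le_nhds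
    have hexparg : Tendsto (fun τ : ℝ => -(a^2)/τ) (nhdsWithin 0 (Ioi 0)) atBot := by
      have hinv2 : Tendsto (fun τ : ℝ => τ⁻¹) (nhdsWithin 0 (Ioi 0)) atTop :=
        tendsto_inv_nhdsGT_zero
      have ha2 : -(a^2) < 0 := by nlinarith
      simpa [div_eq_mul_inv] using hinv2.const_mul_atTop_of_neg ha2
    have hexp0 : Tendsto (fun τ : ℝ => Real.exp (-(a^2)/τ)) (nhdsWithin 0 (Ioi 0))
        (nhds 0) := Real.tendsto_exp_atBot.comp hexparg
    have : Tendsto F (nhdsWithin 0 (Ioi 0))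
        (nhds ((2*a^2) * (-1) + 2*a * 0 * 0 + 2*a^2)) := by
      exact ((hcoef.mul herf0).add (((hsq0.const_mul (2*a)).mul hexp0))).add tendsto_const_nhds
    convert this using 2
    ring
  -- limit at t⁻
  have hFt : HasDerivAt F (erf (a / Real.sqrt t)) t := hderiv t ht
  have hlimt : Tendsto F (nhdsWithin t (Iio t)) (nhds (F t)) :=
    hFt.continuousAt.continuousWithinAt
  have key := intervalIntegral.integral_eq_sub_of_hasDerivAt_of_tendsto ht (fun x hx => hderiv x hx.1) hint hlim0 hlimt
  rw [key, hF]
  have : Real.sqrt (t/π) = Real.sqrt t / Real.sqrt π := Real.sqrt_div ht.le π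
  rw [this]
  ring
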